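/- arXiv:1307.1897 — 6 statements merged into one kernel-verified Lean document; each statement's English description precedes it below -/
import Mathlib

section
/- Let (X, δ) be a diversity and let d(x, y) = δ({x, y}) be its induced metric. If (X, d) is a complete (pseudo)metric space, then (X, δ) is a complete diversity: every Cauchy sequence in the diversity sense converges in the diversity sense. -/
/-- A diversity on `X`: a real-valued function on finite subsets of `X` that is
nonnegative, vanishes exactly on sets with at most one element, and satisfies
the triangle inequality `δ(A ∪ B) ≤ δ(A ∪ C) + δ(C ∪ B)` for nonempty `C`. -/
structure Diversity (X : Type*) [DecidableEq X] where
  δ : Finset X → ℝ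
  nonneg : ∀ A : Finset X, 0 ≤ δ A
  eq_zero_iff : ∀ A : Finset X, δ A = 0 ↔ A.card ≤ 1
  triangle : ∀ A B C : Finset X, C.Nonempty → δ (A ∪ B) ≤ δ (A ∪ C) + δ (C ∪ B)

/-- A sequence `x` converges to `p` in the diversity sense: for every `ε > 0`
there is `N` such that `δ({p} ∪ {x_{i₁}, …, x_{iₙ}}) < ε` for all finite sets of
indices `i₁, …, iₙ ≥ N`. -/
def DivTendsto {X : Type*} [DecidableEq X] (δ : Finset X → ℝ) (x : ℕ → X) (p : X) : Prop :=
  ∀ ε > (0 : ℝ), ∃ N : ℕ, ∀ I : Finset ℕ, (∀ i ∈ I, N ≤ i) →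
    δ (insert p (I.image x)) < ε

/-- A sequence `x` is Cauchy in the diversity sense: for every `ε > 0` there is
`N` such that `δ({x_{i₁}, …, x_{iₙ}}) < ε` for all finite sets of indices
`i₁, …, iₙ ≥ N`. -/
def DivCauchy {X : Type*} [DecidableEq X] (δ : Finset X → ℝ) (x : ℕ → X) : Prop :=
  ∀ ε > (0 : ℝ), ∃ N : ℕ, ∀ I : Finset ℕ, (∀ i ∈ I, N ≤ i) →
    δ (I.image x) < ε

/-- A sequence is Cauchy with respect to the induced metric
`d(x, y) = δ({x, y})`. -/
def MetCauchy {X : Type*} [DecidableEq X] (δ : Finset X → ℝ) (x : ℕ → X) : Prop :=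
  ∀ ε > (0 : ℝ), ∃ N : ℕ, ∀ m ≥ N, ∀ n ≥ N, δ {x m, x n} < ε

/-- A sequence converges to `p` with respect to the induced metric
`d(x, y) = δ({x, y})`. -/
def MetTendsto {X : Type*} [DecidableEq X] (δ : Finset X → ℝ) (x : ℕ → X) (p : X) : Prop :=
  ∀ ε > (0 : ℝ), ∃ N : ℕ, ∀ n ≥ N, δ {p, x n} < ε

/-- If the induced metric of a diversity is complete, then the diversity is
complete: every Cauchy sequence in the diversity sense converges in the
diversity sense. -/
theorem complete_of_inducedMetric_complete {X : Type*} [DecidableEq X]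
    (D : Diversity X)
    (hmet : ∀ x : ℕ → X, MetCauchy D.δ x → ∃ p, MetTendsto D.δ x p) :
    ∀ x : ℕ → X, DivCauchy D.δ x → ∃ p, DivTendsto D.δ x p := by
  intro x hx
  -- the sequence is metric-Cauchy
  have hmc : MetCauchy D.δ x := by
    intro ε hε
    obtain ⟨N, hN⟩ := hx ε hε
    refine ⟨N, fun m hm n hn => ?_⟩
    have := hN {m, n} (by intro i hi; simp at hi; rcases hi with h | h <;> omega)
    simpa [Finset.image_insert] using this
  obtain ⟨p, hp⟩ := hmet x hmc
  refine ⟨p, fun ε hε => ?_⟩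
  obtain ⟨N₁, hN₁⟩ := hx (ε / 2) (by linarith)
  obtain ⟨N₂, hN₂⟩ := hp (ε / 2) (by linarith)
  refine ⟨max N₁ N₂, fun I hI => ?_⟩
  rcases I.eq_empty_or_nonempty with rfl | ⟨i, hi⟩
  · have : D.δ {p} = 0 := (D.eq_zero_iff {p}).2 (by simp)
    simpa [this] using hε
  · have hiN : max N₁ N₂ ≤ i := hI i hi
    have htri := D.triangle {p} (I.image x) {x i} ⟨x i, by simp⟩
    have hsub : ({x i} : Finset X) ∪ I.image x = I.image x := by
      apply Finset.union_eq_right.2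
      simp only [Finset.singleton_subset_iff, Finset.mem_image]
      exact ⟨i, hi, rfl⟩
    have h1 : D.δ ({p} ∪ {x i}) < ε / 2 := by
      have := hN₂ i (le_trans (le_max_right _ _) hiN)
      simpa [Finset.insert_union] using this
    have h2 : D.δ (I.image x) < ε / 2 :=
      hN₁ I (fun j hj => le_trans (le_max_left _ _) (hI j hj))
    rw [hsub] at htri
    have : D.δ ({p} ∪ I.image x) < ε := by linarith
    simpa [Finset.insert_union] using this
end

section
/- Let (X, δ) be a diversity and let d(x, y) = δ({x, y}) be its induced metric. Every sequence in X that is Cauchy with respect to the metric d has a subsequence that is Cauchy with respect to the diversity δ. -/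
lemma Diversity.le_insert {X : Type*} [DecidableEq X] (D : Diversity X)
    (A : Finset X) (c : X) : D.δ A ≤ D.δ (insert c A) := by
  have h := D.triangle A ∅ {c} (Finset.singleton_nonempty c)
  have hc : D.δ ({c} ∪ ∅) = 0 := by
    rw [Finset.union_empty, D.eq_zero_iff]; simp
  rw [Finset.union_empty, hc] at h
  calc D.δ A ≤ D.δ (A ∪ {c}) + 0 := h
    _ = D.δ (insert c A) := by rw [add_zero, Finset.union_comm, ← Finset.insert_eq]

lemma Diversity.mono {X : Type*} [DecidableEq X] (D : Diversity X)
    {A B : Finset X} (h : A ⊆ B) : D.δ A ≤ D.δ B := by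
  have key : ∀ C : Finset X, D.δ A ≤ D.δ (A ∪ C) := by
    intro C
    induction C using Finset.induction_on with
    | empty => simp
    | @insert c s hc ih =>
      calc D.δ A ≤ D.δ (A ∪ s) := ih
        _ ≤ D.δ (insert c (A ∪ s)) := D.le_insert _ _
        _ = D.δ (A ∪ insert c s) := by rw [Finset.union_insert]
  have := key B
  rwa [Finset.union_eq_right.mpr h] at this

lemma Diversity.chain {X : Type*} [DecidableEq X] (D : Diversity X) (y : ℕ → X) :
    ∀ n m : ℕ, D.δ ((Finset.Icc m (m + n)).image y) ≤
      ∑ k ∈ Finset.range n, D.δ {y (m + k), y (m + k + 1)} := by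
  intro n
  induction n with
  | zero =>
    intro m
    simp only [add_zero, Finset.Icc_self, Finset.image_singleton, Finset.range_zero,
      Finset.sum_empty]
    exact le_of_eq ((D.eq_zero_iff _).mpr (by simp))
  | succ n ih =>
    intro m
    have hIcc : Finset.Icc m (m + (n + 1)) = insert m (Finset.Icc (m + 1) (m + 1 + n)) := by
      ext k
      simp only [Finset.mem_Icc, Finset.mem_insert]
      omega
    set S := (Finset.Icc (m + 1) (m + 1 + n)).image y with hS
    have hmem : y (m + 1) ∈ S := Finset.mem_image_of_mem y (by simp)
    have step : D.δ (insert (y m) S) ≤ D.δ {y m, y (m + 1)} + D.δ S := by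
      have h := D.triangle {y m} S {y (m + 1)} (Finset.singleton_nonempty _)
      rw [← Finset.insert_eq, ← Finset.insert_eq, ← Finset.insert_eq,
        Finset.insert_eq_self.mpr hmem] at h
      exact h
    calc D.δ ((Finset.Icc m (m + (n + 1))).image y)
        = D.δ (insert (y m) S) := by rw [hIcc, Finset.image_insert]
      _ ≤ D.δ {y m, y (m + 1)} + D.δ S := step
      _ ≤ D.δ {y m, y (m + 1)} + ∑ k ∈ Finset.range n, D.δ {y (m + 1 + k), y (m + 1 + k + 1)} :=
          by exact add_le_add le_rfl (ih (m + 1))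
      _ = ∑ k ∈ Finset.range (n + 1), D.δ {y (m + k), y (m + k + 1)} := by
          rw [Finset.sum_range_succ']
          simp only [add_zero]
          rw [add_comm]
          congr 1
          apply Finset.sum_congr rfl
          intro k _
          congr 2 <;> ring

/-- Every sequence that is Cauchy with respect to the induced metric of a
diversity has a subsequence that is Cauchy with respect to the diversity. -/
theorem exists_divCauchy_subseq_of_metCauchy {X : Type*} [DecidableEq X]
    (D : Diversity X) (x : ℕ → X) (hx : MetCauchy D.δ x) :
    ∃ φ : ℕ → ℕ, StrictMono φ ∧ DivCauchy D.δ (x ∘ φ) := by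
  have hN : ∀ k : ℕ, ∃ N, ∀ m ≥ N, ∀ n ≥ N, D.δ {x m, x n} < (1 / 2 : ℝ) ^ k :=
    fun k => hx _ (by positivity)
  choose N hN using hN
  set M : ℕ → ℕ := fun k => (Finset.range (k + 1)).sup N with hM
  have hMmono : Monotone M := fun a b hab =>
    Finset.sup_mono (Finset.range_subset_range.mpr (by omega))
  have hNM : ∀ k, N k ≤ M k := fun k => Finset.le_sup (by simp)
  set φ : ℕ → ℕ := fun k => M k + k with hφ
  have hφmono : StrictMono φ := strictMono_nat_of_lt_succ fun k => by
    have h : M k ≤ M (k + 1) := hMmono (by omega)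
    show M k + k < M (k + 1) + (k + 1)
    omega
  refine ⟨φ, hφmono, ?_⟩
  set y : ℕ → X := x ∘ φ with hy
  have key : ∀ k, D.δ {y k, y (k + 1)} < (1 / 2 : ℝ) ^ k := by
    intro k
    apply hN k
    · exact le_trans (hNM k) (Nat.le_add_right _ _)
    · exact le_trans (le_trans (hNM k) (hMmono (Nat.le_succ k))) (Nat.le_add_right _ _)
  intro ε hε
  obtain ⟨K, hK⟩ := exists_pow_lt_of_lt_one (half_pos hε) (by norm_num : (1/2:ℝ) < 1)
  refine ⟨K, fun I hI => ?_⟩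
  rcases I.eq_empty_or_nonempty with rfl | hne
  · simpa using lt_of_le_of_lt (le_of_eq ((D.eq_zero_iff ∅).mpr (by simp))) hε
  set a := I.min' hne with ha
  set b := I.max' hne with hb
  have haK : K ≤ a := hI a (I.min'_mem hne)
  have hab : a ≤ b := I.min'_le _ (I.max'_mem hne)
  have hsub : I ⊆ Finset.Icc a b := fun i hi =>
    Finset.mem_Icc.mpr ⟨I.min'_le i hi, I.le_max' i hi⟩
  have h1 : D.δ (I.image y) ≤ D.δ ((Finset.Icc a (a + (b - a))).image y) := by
    rw [show a + (b - a) = b by omega]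
    exact D.mono (Finset.image_subset_image hsub)
  have h2 := D.chain y (b - a) a
  have h3 : ∑ k ∈ Finset.range (b - a), D.δ {y (a + k), y (a + k + 1)} ≤
      ∑ k ∈ Finset.range (b - a), (1 / 2 : ℝ) ^ (a + k) :=
    Finset.sum_le_sum fun k _ => (key (a + k)).le
  have h4 : ∑ k ∈ Finset.range (b - a), (1 / 2 : ℝ) ^ (a + k) ≤ (1 / 2 : ℝ) ^ a * 2 := by
    simp_rw [pow_add]
    rw [← Finset.mul_sum]
    exact mul_le_mul_of_nonneg_left (sum_geometric_two_le _) (by positivity)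
  have h5 : (1 / 2 : ℝ) ^ a ≤ (1 / 2 : ℝ) ^ K :=
    pow_le_pow_of_le_one (by norm_num) (by norm_num) haK
  calc D.δ (I.image y) ≤ (1 / 2 : ℝ) ^ a * 2 := le_trans h1 (le_trans h2 (le_trans h3 h4))
    _ ≤ (1 / 2 : ℝ) ^ K * 2 := by linarith
    _ < (ε / 2) * 2 := by linarith
    _ = ε := by ring
end

section
/- Every diversity (X, δ) can be embedded in a complete diversity with dense image: there exist a complete diversity (X̂, δ̂) and an injective map π : X → X̂ with δ(A) = δ̂(π(A)) for every finite A ⊆ X, such that every point of X̂ is the limit (in the diversity sense) of a sequence of points of π(X). -/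
universe u


open Filter Topology

namespace DivProof

variable {X : Type u} [DecidableEq X]

theorem delta_empty (D : Diversity X) : D.δ ∅ = 0 := (D.eq_zero_iff ∅).2 (by simp)

theorem delta_single (D : Diversity X) (x : X) : D.δ {x} = 0 :=
  (D.eq_zero_iff {x}).2 (by simp)

theorem insert_ge (D : Diversity X) (B : Finset X) (c : X) :
    D.δ B ≤ D.δ (insert c B) := by
  have h := D.triangle B ∅ {c} (by simp)
  rw [Finset.union_empty, Finset.union_empty, delta_single, add_zero,
    Finset.union_comm, ← Finset.insert_eq] at h
  exact h

theorem union_ge (D : Diversity X) (B A : Finset X) : D.δ B ≤ D.δ (B ∪ A) := by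
  classical
  induction A using Finset.induction with
  | empty => simp
  | @insert a s ha ih =>
    rw [Finset.union_insert]
    exact le_trans ih (insert_ge D _ _)

theorem delta_mono (D : Diversity X) {B A : Finset X} (h : B ⊆ A) : D.δ B ≤ D.δ A := by
  have := union_ge D B A
  rwa [Finset.union_eq_right.2 h] at this

theorem delta_lip (D : Diversity X) (B : Finset X) (x y : X) :
    D.δ (insert x B) ≤ D.δ (insert y B) + D.δ {y, x} := by
  have h := D.triangle B {x} {y} (by simp)
  rw [Finset.union_comm B {x}, ← Finset.insert_eq, Finset.union_comm B {y},
    ← Finset.insert_eq] at h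
  simpa using h

theorem delta_swap {ι : Type*} [DecidableEq ι] (D : Diversity X) (K : Finset ι)
    (f g : ι → X) (B : Finset X) :
    D.δ (B ∪ K.image f) ≤ D.δ (B ∪ K.image g) + ∑ k ∈ K, D.δ {f k, g k} := by
  induction K using Finset.induction generalizing B with
  | empty => simp
  | @insert a s ha ih =>
    rw [Finset.image_insert, Finset.image_insert, Finset.sum_insert ha]
    have h1 : B ∪ insert (f a) (Finset.image f s) = insert (f a) B ∪ Finset.image f s := by
      rw [Finset.union_insert, Finset.insert_union]
    have h2 : B ∪ insert (g a) (Finset.image g s) = insert (g a) B ∪ Finset.image g s := by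
      rw [Finset.union_insert, Finset.insert_union]
    rw [h1, h2]
    calc D.δ (insert (f a) B ∪ Finset.image f s)
        ≤ D.δ (insert (f a) B ∪ Finset.image g s) + ∑ k ∈ s, D.δ {f k, g k} := ih _
      _ ≤ (D.δ (insert (g a) B ∪ Finset.image g s) + D.δ {g a, f a})
            + ∑ k ∈ s, D.δ {f k, g k} := by
          gcongr
          have h3 : insert (f a) B ∪ Finset.image g s
              = insert (f a) (B ∪ Finset.image g s) := by rw [Finset.insert_union]
          have h4 : insert (g a) B ∪ Finset.image g s
              = insert (g a) (B ∪ Finset.image g s) := by rw [Finset.insert_union]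
          rw [h3, h4]
          exact delta_lip D _ _ _
      _ = D.δ (insert (g a) B ∪ Finset.image g s) + (D.δ {f a, g a} + ∑ k ∈ s, D.δ {f k, g k}) := by
          rw [Finset.pair_comm (g a) (f a)]; ring

theorem delta_swap_abs {ι : Type*} [DecidableEq ι] (D : Diversity X) (K : Finset ι)
    (f g : ι → X) :
    |D.δ (K.image f) - D.δ (K.image g)| ≤ ∑ k ∈ K, D.δ {f k, g k} := by
  rw [abs_sub_le_iff]
  constructor
  · have := delta_swap D K f g ∅
    simp only [Finset.empty_union] at this
    linarith
  · have := delta_swap D K g f ∅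
    simp only [Finset.empty_union] at this
    have e : ∑ k ∈ K, D.δ {g k, f k} = ∑ k ∈ K, D.δ {f k, g k} :=
      Finset.sum_congr rfl fun k _ => by rw [Finset.pair_comm]
    linarith

theorem cauchy_pair (D : Diversity X) {x : ℕ → X} (hx : DivCauchy D.δ x) {ε : ℝ}
    (hε : 0 < ε) : ∃ N, ∀ n ≥ N, ∀ m ≥ N, D.δ {x n, x m} < ε := by
  obtain ⟨N, hN⟩ := hx ε hε
  refine ⟨N, fun n hn m hm => ?_⟩
  have := hN {n, m} (by intro i hi; simp at hi; rcases hi with h | h <;> omega)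
  simpa using this


variable (D : Diversity X)

/-- Cauchy sequences in the diversity. -/
def SC := {x : ℕ → X // DivCauchy D.δ x}

def rel (x y : SC D) : Prop :=
  Tendsto (fun n => D.δ {x.1 n, y.1 n}) atTop (𝓝 0)

theorem rel_refl (x : SC D) : rel D x x := by
  have : (fun n => D.δ {x.1 n, x.1 n}) = fun _ => (0 : ℝ) := by
    funext n; simpa using delta_single D (x.1 n)
  unfold rel; rw [this]; exact tendsto_const_nhds

theorem rel_symm {x y : SC D} (h : rel D x y) : rel D y x := by
  have : (fun n => D.δ {y.1 n, x.1 n}) = fun n => D.δ {x.1 n, y.1 n} := by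
    funext n; rw [Finset.pair_comm]
  rw [rel, this]; exact h

theorem rel_trans {x y z : SC D} (h1 : rel D x y) (h2 : rel D y z) : rel D x z := by
  have hb : ∀ n, D.δ {x.1 n, z.1 n} ≤ D.δ {x.1 n, y.1 n} + D.δ {y.1 n, z.1 n} := by
    intro n
    have := D.triangle {x.1 n} {z.1 n} {y.1 n} (by simp)
    simpa using this
  have h3 : Tendsto (fun n => D.δ {x.1 n, y.1 n} + D.δ {y.1 n, z.1 n}) atTop (𝓝 0) := by
    simpa using h1.add h2
  exact squeeze_zero (fun n => D.nonneg _) hb h3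

instance st : Setoid (SC D) := ⟨rel D, rel_refl D, rel_symm D, rel_trans D⟩

def Cpl := Quotient (st D)

noncomputable instance : DecidableEq (Cpl D) := Classical.decEq _

noncomputable def rep (c : Cpl D) : ℕ → X := (Quotient.out c).1

theorem rep_cauchy (c : Cpl D) : DivCauchy D.δ (rep D c) := (Quotient.out c).2

theorem rep_rel (x : SC D) : rel D (Quotient.out (⟦x⟧ : Cpl D)) x :=
  Quotient.exact (s := st D) (Quotient.out_eq (⟦x⟧ : Cpl D))

noncomputable def Fseq (A : Finset (Cpl D)) (n : ℕ) : ℝ :=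
  D.δ (A.image (fun c => rep D c n))

theorem uniform_pair (A : Finset (Cpl D)) {ε : ℝ} (hε : 0 < ε) :
    ∃ N, ∀ c ∈ A, ∀ n ≥ N, ∀ m ≥ N, D.δ {rep D c n, rep D c m} < ε := by
  classical
  induction A using Finset.induction with
  | empty => exact ⟨0, by simp⟩
  | @insert a s _ ih =>
    obtain ⟨N1, hN1⟩ := ih
    obtain ⟨N2, hN2⟩ := cauchy_pair D (rep_cauchy D a) hε
    refine ⟨max N1 N2, fun c hc n hn m hm => ?_⟩
    rcases Finset.mem_insert.1 hc with h | h
    · subst h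
      exact hN2 n (le_trans (le_max_right _ _) hn) m (le_trans (le_max_right _ _) hm)
    · exact hN1 c h n (le_trans (le_max_left _ _) hn) m (le_trans (le_max_left _ _) hm)

theorem Fseq_cauchy (A : Finset (Cpl D)) : CauchySeq (Fseq D A) := by
  rw [Metric.cauchySeq_iff]
  intro ε hε
  have hb : (0:ℝ) < ε / (2 * (A.card + 1)) := by positivity
  obtain ⟨N, hN⟩ := uniform_pair D A hb
  refine ⟨N, fun m hm n hn => ?_⟩
  rw [Real.dist_eq]
  have h1 : |Fseq D A m - Fseq D A n| ≤ ∑ c ∈ A, D.δ {rep D c m, rep D c n} :=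
    delta_swap_abs D A _ _
  have h2 : ∑ c ∈ A, D.δ {rep D c m, rep D c n} ≤ A.card • (ε / (2 * (A.card + 1))) :=
    Finset.sum_le_card_nsmul A _ _ (fun c hc => le_of_lt (hN c hc m hm n hn))
  have h3 : A.card • (ε / (2 * ((A.card:ℝ) + 1))) < ε := by
    rw [nsmul_eq_mul, ← mul_div_assoc, div_lt_iff₀ (by positivity)]
    have hc : (0:ℝ) ≤ (A.card : ℝ) := Nat.cast_nonneg _
    nlinarith
  calc |Fseq D A m - Fseq D A n| ≤ _ := h1
    _ ≤ _ := h2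
    _ < ε := h3

noncomputable def Ediv (A : Finset (Cpl D)) : ℝ := limUnder atTop (Fseq D A)

theorem Fseq_tendsto (A : Finset (Cpl D)) :
    Tendsto (Fseq D A) atTop (𝓝 (Ediv D A)) := (Fseq_cauchy D A).tendsto_limUnder

theorem Ediv_nonneg (A : Finset (Cpl D)) : 0 ≤ Ediv D A :=
  ge_of_tendsto (Fseq_tendsto D A) (Filter.Eventually.of_forall fun n => D.nonneg _)

theorem Ediv_triangle (A B C : Finset (Cpl D)) (hC : C.Nonempty) :
    Ediv D (A ∪ B) ≤ Ediv D (A ∪ C) + Ediv D (C ∪ B) := by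
  refine le_of_tendsto_of_tendsto' (Fseq_tendsto D (A ∪ B))
    ((Fseq_tendsto D (A ∪ C)).add (Fseq_tendsto D (C ∪ B))) (fun n => ?_)
  unfold Fseq
  rw [Finset.image_union, Finset.image_union, Finset.image_union]
  exact D.triangle _ _ _ (hC.image _)

theorem Ediv_eq_zero_iff (A : Finset (Cpl D)) : Ediv D A = 0 ↔ A.card ≤ 1 := by
  constructor
  · intro h
    by_contra hc
    push_neg at hc
    obtain ⟨c, hcA, c', hc'A, hne⟩ := Finset.one_lt_card.1 hc
    have hmono : ∀ n, D.δ {rep D c n, rep D c' n} ≤ Fseq D A n := by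
      intro n
      apply delta_mono
      intro a ha
      simp only [Finset.mem_insert, Finset.mem_singleton] at ha
      rcases ha with h' | h' <;> subst h' <;>
        exact Finset.mem_image.2 ⟨_, by assumption, rfl⟩
    have hF0 : Tendsto (Fseq D A) atTop (𝓝 0) := h ▸ Fseq_tendsto D A
    have hrel : rel D (Quotient.out c) (Quotient.out c') :=
      squeeze_zero (fun n => D.nonneg _) hmono hF0
    have : c = c' := by
      rw [← Quotient.out_eq c, ← Quotient.out_eq c']
      exact Quotient.sound hrel
    exact hne this
  · intro h
    rcases A.eq_empty_or_nonempty with h0 | hne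
    · subst h0
      have : Fseq D ∅ = fun _ => (0:ℝ) := by
        funext n; unfold Fseq; simp [delta_empty]
      exact tendsto_nhds_unique (Fseq_tendsto D ∅) (this ▸ tendsto_const_nhds)
    · have hc1 : A.card = 1 := le_antisymm h (Finset.card_pos.2 hne)
      obtain ⟨c, rfl⟩ := Finset.card_eq_one.1 hc1
      have : Fseq D {c} = fun _ => (0:ℝ) := by
        funext n; unfold Fseq; simp [delta_single]
      exact tendsto_nhds_unique (Fseq_tendsto D {c}) (this ▸ tendsto_const_nhds)

noncomputable def EdivD : Diversity (Cpl D) where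
  δ := Ediv D
  nonneg := Ediv_nonneg D
  eq_zero_iff := Ediv_eq_zero_iff D
  triangle := Ediv_triangle D

theorem const_cauchy (x : X) : DivCauchy D.δ (fun _ => x) := by
  intro ε hε
  refine ⟨0, fun I _ => ?_⟩
  rcases I.eq_empty_or_nonempty with h | h
  · subst h; simpa [delta_empty] using hε
  · rw [Finset.image_const h]
    simpa [delta_single] using hε

noncomputable def emb (x : X) : Cpl D := ⟦⟨fun _ => x, const_cauchy D x⟩⟧

theorem emb_injective : Function.Injective (emb D) := by
  intro x x' h
  have hr : rel D ⟨fun _ => x, const_cauchy D x⟩ ⟨fun _ => x', const_cauchy D x'⟩ :=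
    Quotient.exact h
  have h0 : D.δ {x, x'} = 0 :=
    tendsto_nhds_unique (tendsto_const_nhds : Tendsto (fun _ : ℕ => D.δ {x, x'}) atTop _) hr
  by_contra hne
  have : ({x, x'} : Finset X).card = 2 := Finset.card_pair hne
  have := (D.eq_zero_iff {x, x'}).1 h0
  omega

theorem rep_emb_rel (x : X) :
    Tendsto (fun n => D.δ {rep D (emb D x) n, x}) atTop (𝓝 0) := by
  have := rep_rel D (⟨fun _ => x, const_cauchy D x⟩ : SC D)
  exact this

theorem emb_isometry (A : Finset X) : D.δ A = Ediv D (A.image (emb D)) := by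
  have key : ∀ n, |Fseq D (A.image (emb D)) n - D.δ A|
      ≤ ∑ a ∈ A, D.δ {rep D (emb D a) n, a} := by
    intro n
    have h1 : Fseq D (A.image (emb D)) n = D.δ (A.image (fun a => rep D (emb D a) n)) := by
      unfold Fseq; rw [Finset.image_image]; simp only [Function.comp_def]
    have h2 : D.δ A = D.δ (A.image id) := by rw [Finset.image_id]
    rw [h1, h2]
    exact delta_swap_abs D A _ id
  have hsum : Tendsto (fun n => ∑ a ∈ A, D.δ {rep D (emb D a) n, a}) atTop (𝓝 0) := by
    have := tendsto_finset_sum A (fun a _ => rep_emb_rel D a)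
    simpa using this
  have : Tendsto (Fseq D (A.image (emb D))) atTop (𝓝 (D.δ A)) := by
    rw [tendsto_iff_dist_tendsto_zero]
    refine squeeze_zero (fun n => dist_nonneg) (fun n => ?_) hsum
    rw [Real.dist_eq]; exact key n
  exact (tendsto_nhds_unique (Fseq_tendsto D _) this).symm

theorem geom_tail_sum (K : Finset ℕ) (N : ℕ) (hK : ∀ k ∈ K, N ≤ k) :
    ∑ k ∈ K, ((1:ℝ)/2) ^ k ≤ 2 * ((1:ℝ)/2) ^ N := by
  rcases K.eq_empty_or_nonempty with h | hne
  · subst h; simp only [Finset.sum_empty]; positivity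
  · set M := K.sup id with hM
    have hsub : K ⊆ Finset.Ico N (M + 1) := fun k hk =>
      Finset.mem_Ico.2 ⟨hK k hk, Nat.lt_succ_of_le (Finset.le_sup (f := id) hk)⟩
    have h1 : ∑ k ∈ K, ((1:ℝ)/2) ^ k ≤ ∑ k ∈ Finset.Ico N (M + 1), ((1:ℝ)/2) ^ k :=
      Finset.sum_le_sum_of_subset_of_nonneg hsub (fun i _ _ => by positivity)
    obtain ⟨k0, hk0⟩ := hne
    have hNM : N ≤ M + 1 :=
      le_trans (hK k0 hk0) (le_trans (Finset.le_sup (f := id) hk0) (Nat.le_succ _))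
    have h2 : ∑ k ∈ Finset.Ico N (M + 1), ((1:ℝ)/2) ^ k
        = (((1:ℝ)/2) ^ (M + 1) - ((1:ℝ)/2) ^ N) / ((1:ℝ)/2 - 1) :=
      geom_sum_Ico (by norm_num) hNM
    rw [h2] at h1
    have hpow : (0:ℝ) ≤ ((1:ℝ)/2) ^ (M + 1) := by positivity
    calc ∑ k ∈ K, ((1:ℝ)/2) ^ k
        ≤ (((1:ℝ)/2) ^ (M + 1) - ((1:ℝ)/2) ^ N) / ((1:ℝ)/2 - 1) := h1
      _ = 2 * (((1:ℝ)/2) ^ N - ((1:ℝ)/2) ^ (M + 1)) := by ring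
      _ ≤ 2 * ((1:ℝ)/2) ^ N := by nlinarith

theorem dense_emb (p : Cpl D) :
    DivTendsto (Ediv D) (fun m => emb D (rep D p m)) p := by
  intro ε hε
  obtain ⟨N, hN⟩ := rep_cauchy D p (ε/2) (half_pos hε)
  refine ⟨N, fun I hI => ?_⟩
  set x := rep D p with hx
  set A := insert p (I.image (fun m => emb D (x m))) with hA
  have hFA : ∀ m, Fseq D A m
      = D.δ (insert (x m) (I.image (fun i => rep D (emb D (x i)) m))) := by
    intro m
    unfold Fseq
    rw [hA, Finset.image_insert, Finset.image_image, hx]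
    simp only [Function.comp_def]
  have hbound : ∀ m, N ≤ m → Fseq D A m
      ≤ ε/2 + ∑ i ∈ I, D.δ {rep D (emb D (x i)) m, x i} := by
    intro m hm
    rw [hFA m]
    have hswap := delta_swap D I (fun i => rep D (emb D (x i)) m) x {x m}
    rw [← Finset.insert_eq, ← Finset.insert_eq] at hswap
    have htail : D.δ (insert (x m) (I.image x)) < ε/2 := by
      have he : insert (x m) (I.image x) = (insert m I).image x :=
        (Finset.image_insert _ _ _).symm
      rw [he]
      refine hN _ (fun i hi => ?_)
      rcases Finset.mem_insert.1 hi with h | h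
      · omega
      · exact hI i h
    linarith
  have hsum : Tendsto (fun m => ∑ i ∈ I, D.δ {rep D (emb D (x i)) m, x i}) atTop (𝓝 0) := by
    have := tendsto_finset_sum I (fun i _ => rep_emb_rel D (x i))
    simpa using this
  have hle : Ediv D A ≤ ε/2 := by
    have h2 : Tendsto (fun m => ε/2 + ∑ i ∈ I, D.δ {rep D (emb D (x i)) m, x i})
        atTop (𝓝 (ε/2 + 0)) := tendsto_const_nhds.add hsum
    rw [add_zero] at h2
    exact le_of_tendsto_of_tendsto (Fseq_tendsto D A) h2
      (eventually_atTop.2 ⟨N, hbound⟩)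
  exact lt_of_le_of_lt hle (by linarith)

set_option maxHeartbeats 1000000 in
theorem complete_div (y : ℕ → Cpl D) (hy : DivCauchy (Ediv D) y) :
    ∃ p : Cpl D, DivTendsto (Ediv D) y p := by
  classical
  have hhalf : ∀ k : ℕ, (0:ℝ) < ((1:ℝ)/2) ^ k := fun k => by positivity
  choose n hn using fun k => rep_cauchy D (y k) (((1:ℝ)/2) ^ k) (hhalf k)
  set z : ℕ → X := fun k => rep D (y k) (n k) with hz
  have hpair : ∀ k m, n k ≤ m → D.δ {z k, rep D (y k) m} < ((1:ℝ)/2) ^ k := by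
    intro k m hm
    have := hn k {n k, m} (by intro i hi; simp at hi; rcases hi with h | h <;> omega)
    simpa using this
  -- z is Cauchy
  have hzC : DivCauchy D.δ z := by
    intro ε hε
    obtain ⟨N1, hN1⟩ := hy (ε/2) (half_pos hε)
    obtain ⟨N2, hN2⟩ := exists_pow_lt_of_lt_one (show (0:ℝ) < ε/4 by linarith)
      (show (1:ℝ)/2 < 1 by norm_num)
    refine ⟨max N1 N2, fun K hK => ?_⟩
    have hgeom : ∑ k ∈ K, ((1:ℝ)/2) ^ k ≤ 2 * ((1:ℝ)/2) ^ (max N1 N2) :=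
      geom_tail_sum K _ hK
    have hmono : ((1:ℝ)/2) ^ (max N1 N2) ≤ ((1:ℝ)/2) ^ N2 :=
      pow_le_pow_of_le_one (by norm_num) (by norm_num) (le_max_right _ _)
    have hkey : ∀ m, K.sup n ≤ m →
        D.δ (K.image z) - ∑ k ∈ K, ((1:ℝ)/2) ^ k ≤ Fseq D (K.image y) m := by
      intro m hm
      have h1 : Fseq D (K.image y) m = D.δ (K.image (fun k => rep D (y k) m)) := by
        unfold Fseq; rw [Finset.image_image]; simp only [Function.comp_def]
      have h2 := delta_swap D K z (fun k => rep D (y k) m) ∅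
      simp only [Finset.empty_union] at h2
      have h3 : ∑ k ∈ K, D.δ {z k, rep D (y k) m} ≤ ∑ k ∈ K, ((1:ℝ)/2) ^ k :=
        Finset.sum_le_sum fun k hk =>
          le_of_lt (hpair k m (le_trans (Finset.le_sup hk) hm))
      rw [h1]; linarith
    have hlim : D.δ (K.image z) - ∑ k ∈ K, ((1:ℝ)/2) ^ k ≤ Ediv D (K.image y) :=
      ge_of_tendsto (Fseq_tendsto D _) (eventually_atTop.2 ⟨K.sup n, hkey⟩)
    have hy2 : Ediv D (K.image y) < ε/2 :=
      hN1 K (fun k hk => le_trans (le_max_left _ _) (hK k hk))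
    have : ∑ k ∈ K, ((1:ℝ)/2) ^ k < ε/2 := by
      calc ∑ k ∈ K, ((1:ℝ)/2) ^ k ≤ 2 * ((1:ℝ)/2) ^ (max N1 N2) := hgeom
        _ ≤ 2 * ((1:ℝ)/2) ^ N2 := by linarith
        _ < ε/2 := by linarith
    linarith
  refine ⟨⟦⟨z, hzC⟩⟧, ?_⟩
  intro ε hε
  obtain ⟨Nz, hNz⟩ := hzC (ε/3) (by linarith)
  obtain ⟨N2, hN2⟩ := exists_pow_lt_of_lt_one (show (0:ℝ) < ε/6 by linarith)
    (show (1:ℝ)/2 < 1 by norm_num)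
  set q : Cpl D := ⟦⟨z, hzC⟩⟧ with hq
  refine ⟨max Nz N2, fun K hK => ?_⟩
  set A := insert q (K.image y) with hA
  have ht : Tendsto (fun m => D.δ {z m, rep D q m}) atTop (𝓝 0) :=
    rel_symm D (rep_rel D ⟨z, hzC⟩)
  have hS : ∑ k ∈ K, ((1:ℝ)/2) ^ k ≤ ε/3 := by
    have hgeom : ∑ k ∈ K, ((1:ℝ)/2) ^ k ≤ 2 * ((1:ℝ)/2) ^ (max Nz N2) :=
      geom_tail_sum K _ hK
    have hmono : ((1:ℝ)/2) ^ (max Nz N2) ≤ ((1:ℝ)/2) ^ N2 :=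
      pow_le_pow_of_le_one (by norm_num) (by norm_num) (le_max_right _ _)
    linarith
  have hkey : ∀ m, max (max Nz N2) (K.sup n) ≤ m →
      Fseq D A m ≤ ε/3 + ∑ k ∈ K, ((1:ℝ)/2) ^ k + D.δ {z m, rep D q m} := by
    intro m hm
    have hFA : Fseq D A m
        = D.δ (insert (rep D q m) (K.image (fun k => rep D (y k) m))) := by
      unfold Fseq
      rw [hA, Finset.image_insert, Finset.image_image]
      simp only [Function.comp_def]
    have hlipb : D.δ (insert (rep D q m) (K.image (fun k => rep D (y k) m)))
        ≤ D.δ (insert (z m) (K.image (fun k => rep D (y k) m))) + D.δ {z m, rep D q m} :=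
      delta_lip D _ _ _
    have hswap := delta_swap D K (fun k => rep D (y k) m) z {z m}
    rw [← Finset.insert_eq, ← Finset.insert_eq] at hswap
    have hsum2 : ∑ k ∈ K, D.δ {rep D (y k) m, z k} ≤ ∑ k ∈ K, ((1:ℝ)/2) ^ k := by
      refine Finset.sum_le_sum fun k hk => ?_
      rw [Finset.pair_comm]
      exact le_of_lt (hpair k m (le_trans (Finset.le_sup hk) (le_trans (le_max_right _ _) hm)))
    have htail : D.δ (insert (z m) (K.image z)) < ε/3 := by
      have he : insert (z m) (K.image z) = (insert m K).image z :=
        (Finset.image_insert _ _ _).symm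
      rw [he]
      refine hNz _ (fun i hi => ?_)
      rcases Finset.mem_insert.1 hi with h | h
      · subst h
        exact le_trans (le_trans (le_max_left _ _) (le_trans (le_max_left _ _) hm))
          (le_refl _)
      · exact le_trans (le_max_left _ _) (hK i h)
    rw [hFA]
    linarith
  have hle : Ediv D A ≤ ε/3 + ∑ k ∈ K, ((1:ℝ)/2) ^ k := by
    have h2 : Tendsto (fun m => ε/3 + ∑ k ∈ K, ((1:ℝ)/2) ^ k + D.δ {z m, rep D q m})
        atTop (𝓝 (ε/3 + ∑ k ∈ K, ((1:ℝ)/2) ^ k + 0)) := tendsto_const_nhds.add ht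
    rw [add_zero] at h2
    exact le_of_tendsto_of_tendsto (Fseq_tendsto D A) h2
      (eventually_atTop.2 ⟨_, hkey⟩)
  have : Ediv D A < ε := by linarith
  exact this


end DivProof

/-- Every diversity embeds, with dense image, in a complete diversity: there is
a complete diversity `(Y, E)` and an injective map `π : X → Y` preserving the
diversity values, such that every point of `Y` is the limit (in the diversity
sense) of a sequence of points of `π(X)`. -/
theorem exists_complete_dense_embedding {X : Type u} [DecidableEq X] (D : Diversity X) :
    ∃ (Y : Type u) (instY : DecidableEq Y) (E : @Diversity Y instY) (π : X → Y),
      Function.Injective π ∧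
      (∀ A : Finset X, D.δ A = E.δ (@Finset.image X Y instY π A)) ∧
      (∀ y : ℕ → Y, @DivCauchy Y instY E.δ y → ∃ p : Y, @DivTendsto Y instY E.δ y p) ∧
      (∀ p : Y, ∃ x : ℕ → X, @DivTendsto Y instY E.δ (fun n => π (x n)) p) := by
  exact ⟨DivProof.Cpl D, inferInstance, DivProof.EdivD D, DivProof.emb D,
    DivProof.emb_injective D, DivProof.emb_isometry D, DivProof.complete_div D,
    fun p => ⟨fun m => DivProof.rep D p m, DivProof.dense_emb D p⟩⟩
end

section
/- Let (X, δ) be a diversity and let π : X → X̂ be an embedding into a complete diversity (X̂, δ̂) whose image is dense (every point of X̂ is the limit of a sequence of points of π(X)). Then for every complete diversity (Y, γ) and every uniformly continuous function f : X → Y there exists a unique uniformly continuous function f̂ : X̂ → Y with f̂ ∘ π = f. -/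
/-- A function between diversities is uniformly continuous if for every
`ε > 0` there is `d > 0` such that `δ_X(A) < d` implies `δ_Y(f(A)) < ε` for
every finite `A ⊆ X`. -/
def DivUniformContinuous {X Y : Type*} [DecidableEq X] [DecidableEq Y]
    (δX : Finset X → ℝ) (δY : Finset Y → ℝ) (f : X → Y) : Prop :=
  ∀ ε > (0 : ℝ), ∃ d > (0 : ℝ), ∀ A : Finset X, δX A < d → δY (A.image f) < ε

/-- A diversity is complete if every Cauchy sequence converges. -/
def DivComplete {X : Type*} [DecidableEq X] (δ : Finset X → ℝ) : Prop :=
  ∀ x : ℕ → X, DivCauchy δ x → ∃ p, DivTendsto δ x p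

namespace DivAux
variable {Z : Type*} [DecidableEq Z]

lemma delta_singleton (D : Diversity Z) (c : Z) : D.δ {c} = 0 :=
  (D.eq_zero_iff {c}).mpr (by simp)

lemma le_insert (D : Diversity Z) (c : Z) (S : Finset Z) : D.δ S ≤ D.δ (insert c S) := by
  rcases S.eq_empty_or_nonempty with rfl | hS
  · rw [(D.eq_zero_iff ∅).mpr (by simp)]; exact D.nonneg _
  · have h := D.triangle S ∅ {c} (Finset.singleton_nonempty c)
    simp only [Finset.union_empty, delta_singleton, add_zero] at h
    rwa [Finset.union_comm, ← Finset.insert_eq] at h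

lemma le_union (D : Diversity Z) (S T : Finset Z) : D.δ S ≤ D.δ (S ∪ T) := by
  induction T using Finset.induction_on with
  | empty => simp
  | @insert a T ha ih =>
    rw [Finset.union_insert]
    exact le_trans ih (le_insert D _ _)

lemma mono (D : Diversity Z) {S T : Finset Z} (h : S ⊆ T) : D.δ S ≤ D.δ T := by
  have := le_union D S T
  rwa [Finset.union_eq_right.mpr h] at this

lemma replace (D : Diversity Z) {P : Type*} [DecidableEq P] (g h : P → Z) (S : Finset P) (T : Finset Z) :
    D.δ (S.image h ∪ T) ≤ D.δ (S.image g ∪ T) + ∑ p ∈ S, D.δ {g p, h p} := by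
  induction S using Finset.induction_on generalizing T with
  | empty => simp
  | @insert a S' ha ih =>
    rw [Finset.image_insert, Finset.image_insert, Finset.sum_insert ha]
    have t1 : D.δ (insert (h a) (S'.image h) ∪ T)
        ≤ D.δ {g a, h a} + D.δ (S'.image h ∪ insert (g a) T) := by
      have h2 := D.triangle {h a} (S'.image h ∪ T) {g a} (Finset.singleton_nonempty _)
      calc D.δ (insert (h a) (S'.image h) ∪ T)
          = D.δ ({h a} ∪ (S'.image h ∪ T)) := by
            rw [Finset.insert_eq, Finset.union_assoc]
        _ ≤ D.δ ({h a} ∪ {g a}) + D.δ ({g a} ∪ (S'.image h ∪ T)) := h2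
        _ = D.δ {g a, h a} + D.δ (S'.image h ∪ insert (g a) T) := by
            congr 1
            · congr 1
              rw [Finset.union_comm]
              rfl
            · congr 1
              rw [Finset.union_insert, Finset.insert_eq]
    have t2 := ih (insert (g a) T)
    have t3 : S'.image g ∪ insert (g a) T = insert (g a) (S'.image g) ∪ T := by
      rw [Finset.union_insert, Finset.insert_union]
    rw [t3] at t2
    linarith

lemma tendsto_unique (D : Diversity Z) (y : ℕ → Z) (p q : Z)
    (hp : ∀ ε > (0:ℝ), ∃ N : ℕ, ∀ I : Finset ℕ, (∀ i ∈ I, N ≤ i) → D.δ (insert p (I.image y)) < ε)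
    (hq : ∀ ε > (0:ℝ), ∃ N : ℕ, ∀ I : Finset ℕ, (∀ i ∈ I, N ≤ i) → D.δ (insert q (I.image y)) < ε) :
    p = q := by
  by_contra hne
  have hcard : ({p, q} : Finset Z).card = 2 := Finset.card_pair hne
  have hpos : 0 < D.δ {p, q} := by
    rcases lt_or_eq_of_le (D.nonneg {p, q}) with h | h
    · exact h
    · exact absurd ((D.eq_zero_iff {p, q}).mp h.symm) (by omega)
  obtain ⟨N₁, h1⟩ := hp (D.δ {p, q} / 2) (by linarith)
  obtain ⟨N₂, h2⟩ := hq (D.δ {p, q} / 2) (by linarith)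
  have e1 := h1 {max N₁ N₂} (by simp)
  have e2 := h2 {max N₁ N₂} (by simp)
  rw [Finset.image_singleton] at e1 e2
  have tri := D.triangle {p} {q} {y (max N₁ N₂)} (Finset.singleton_nonempty _)
  have r1 : ({p} : Finset Z) ∪ {q} = {p, q} := rfl
  have r2 : ({p} : Finset Z) ∪ {y (max N₁ N₂)} = insert p {y (max N₁ N₂)} := rfl
  have r3 : ({y (max N₁ N₂)} : Finset Z) ∪ {q} = insert q {y (max N₁ N₂)} := by
    rw [Finset.union_comm]; rfl
  rw [r1, r2, r3] at tri
  linarith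



lemma tendsto_comp {Z W : Type*} [DecidableEq Z] [DecidableEq W]
    (DZ : Diversity Z) (DW : Diversity W) (g : Z → W)
    (hg : DivUniformContinuous DZ.δ DW.δ g) (y : ℕ → Z) (p : Z)
    (hy : DivTendsto DZ.δ y p) : DivTendsto DW.δ (fun n => g (y n)) (g p) := by
  intro ε hε
  obtain ⟨d, hd, h⟩ := hg ε hε
  obtain ⟨N, hN⟩ := hy d hd
  refine ⟨N, fun I hI => ?_⟩
  have := h _ (hN I hI)
  rwa [Finset.image_insert, Finset.image_image] at this

end DivAux

/-- Universal property of the completion: if `π : X → X̂` is an embedding of a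
diversity into a complete diversity with dense image, then every uniformly
continuous map `f` from `X` into a complete diversity `Y` extends uniquely to
a uniformly continuous map `f̂ : X̂ → Y` with `f̂ ∘ π = f`. -/

theorem completion_universal_property {X Xh Y : Type*}
    [DecidableEq X] [DecidableEq Xh] [DecidableEq Y]
    (D : Diversity X) (Dh : Diversity Xh) (G : Diversity Y)
    (π : X → Xh) (hinj : Function.Injective π)
    (hemb : ∀ A : Finset X, D.δ A = Dh.δ (A.image π))
    (hXhcomplete : DivComplete Dh.δ)
    (hdense : ∀ p : Xh, ∃ x : ℕ → X, DivTendsto Dh.δ (fun n => π (x n)) p)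
    (hYcomplete : DivComplete G.δ)
    (f : X → Y) (hf : DivUniformContinuous D.δ G.δ f) :
    ∃! fh : Xh → Y, DivUniformContinuous Dh.δ G.δ fh ∧ fh ∘ π = f := by
  classical
  -- choose approximating sequences
  choose seq hseq using hdense
  -- the approximating sequences are Cauchy in X
  have hcauchyX : ∀ p, DivCauchy D.δ (seq p) := by
    intro p ε hε
    obtain ⟨N, hN⟩ := hseq p ε hε
    refine ⟨N, fun I hI => ?_⟩
    rw [hemb, Finset.image_image]
    calc Dh.δ (I.image (π ∘ seq p))
        = Dh.δ (I.image (fun n => π (seq p n))) := rfl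
      _ ≤ Dh.δ (insert p (I.image (fun n => π (seq p n)))) := DivAux.le_insert Dh _ _
      _ < ε := hN I hI
  -- their images under f are Cauchy in Y
  have hcauchyY : ∀ p, DivCauchy G.δ (fun n => f (seq p n)) := by
    intro p ε hε
    obtain ⟨d, hd, hfd⟩ := hf ε hε
    obtain ⟨N, hN⟩ := hcauchyX p d hd
    refine ⟨N, fun I hI => ?_⟩
    have := hfd _ (hN I hI)
    rwa [Finset.image_image] at this
  choose fh hfh using fun p => hYcomplete _ (hcauchyY p)
  -- pulling back convergence along π
  have hseqX : ∀ a : X, DivTendsto D.δ (seq (π a)) a := by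
    intro a ε hε
    obtain ⟨N, hN⟩ := hseq (π a) ε hε
    refine ⟨N, fun I hI => ?_⟩
    rw [hemb, Finset.image_insert, Finset.image_image]
    exact hN I hI
  -- f̂ ∘ π = f
  have hcomp : fh ∘ π = f := by
    funext a
    have h1 : DivTendsto G.δ (fun n => f (seq (π a) n)) (f a) :=
      DivAux.tendsto_comp D G f hf (seq (π a)) a (hseqX a)
    exact DivAux.tendsto_unique G _ _ _ (hfh (π a)) h1
  -- f̂ is uniformly continuous
  have hUC : DivUniformContinuous Dh.δ G.δ fh := by
    intro ε hε
    obtain ⟨d, hd, hfd⟩ := hf (ε / 2) (by linarith)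
    refine ⟨d / 2, by linarith, fun A hA => ?_⟩
    have hcard1 : (0 : ℝ) < (A.card : ℝ) + 1 := by positivity
    set η : ℝ := (d / 2) / ((A.card : ℝ) + 1) with hη
    set θ : ℝ := (ε / 2) / ((A.card : ℝ) + 1) with hθ
    have hηpos : 0 < η := by positivity
    have hθpos : 0 < θ := by positivity
    -- choose good approximation indices
    have key : ∀ p : Xh, ∃ m : ℕ,
        Dh.δ {p, π (seq p m)} < η ∧ G.δ {fh p, f (seq p m)} < θ := by
      intro p
      obtain ⟨N₁, h1⟩ := hseq p η hηpos
      obtain ⟨N₂, h2⟩ := hfh p θ hθpos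
      refine ⟨max N₁ N₂, ?_, ?_⟩
      · have := h1 {max N₁ N₂} (by simp)
        rwa [Finset.image_singleton] at this
      · have := h2 {max N₁ N₂} (by simp)
        rwa [Finset.image_singleton] at this
    choose m hm1 hm2 using key
    set b : Xh → X := fun p => seq p (m p) with hb
    -- the approximating set in X has small diversity
    have s1 : Dh.δ (A.image (fun p => π (b p))) < d := by
      have h1 := DivAux.replace Dh id (fun p => π (b p)) A ∅
      rw [Finset.union_empty, Finset.union_empty, Finset.image_id] at h1
      simp only [id_eq] at h1
      have h2 : ∑ p ∈ A, Dh.δ {p, π (b p)} ≤ (A.card : ℝ) * η := by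
        have := Finset.sum_le_card_nsmul A (fun p => Dh.δ {p, π (b p)}) η
          (fun p _ => le_of_lt (hm1 p))
        simpa [nsmul_eq_mul] using this
      have h3 : (A.card : ℝ) * η ≤ d / 2 := by
        rw [hη]
        rw [mul_div_assoc']
        rw [div_le_iff₀ hcard1]
        nlinarith [Nat.cast_nonneg (α := ℝ) A.card]
      linarith
    have s2 : D.δ (A.image b) < d := by
      rw [hemb, Finset.image_image]
      exact s1
    have s3 : G.δ (A.image (fun p => f (b p))) < ε / 2 := by
      have := hfd _ s2
      rwa [Finset.image_image] at this
    have s4 := DivAux.replace G (fun p => f (b p)) fh A ∅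
    rw [Finset.union_empty, Finset.union_empty] at s4
    have h5 : ∑ p ∈ A, G.δ {f (b p), fh p} ≤ (A.card : ℝ) * θ := by
      have := Finset.sum_le_card_nsmul A (fun p => G.δ {f (b p), fh p}) θ
        (fun p _ => by
          rw [Finset.pair_comm]
          exact le_of_lt (hm2 p))
      simpa [nsmul_eq_mul] using this
    have h6 : (A.card : ℝ) * θ ≤ ε / 2 := by
      rw [hθ, mul_div_assoc', div_le_iff₀ hcard1]
      nlinarith [Nat.cast_nonneg (α := ℝ) A.card]
    linarith
  refine ⟨fh, ⟨hUC, hcomp⟩, ?_⟩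
  intro g ⟨hgUC, hgπ⟩
  funext p
  have h1 : DivTendsto G.δ (fun n => g (π (seq p n))) (g p) :=
    DivAux.tendsto_comp Dh G g hgUC (fun n => π (seq p n)) p (hseq p)
  have h2 : (fun n => g (π (seq p n))) = fun n => f (seq p n) := by
    funext n
    exact congrFun hgπ (seq p n)
  rw [h2] at h1
  exact DivAux.tendsto_unique G _ _ _ h1 (hfh p)
end

section
/- Let (X, 𝒞) be a conformity with a countable base. Then 𝒞 has a countable base {C_n}_{n≥0} with C_0 = P_fin(X) and C_i ∘ C_i ∘ C_i ⊆ C_{i−1} for all i > 0. -/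
/-- Composition of collections of finite sets:
`U ∘ V = { u ∪ v : u ∈ U, v ∈ V, u ∩ v ≠ ∅ }`. -/
def SetComp {X : Type*} [DecidableEq X] (U V : Set (Finset X)) : Set (Finset X) :=
  {w | ∃ u ∈ U, ∃ v ∈ V, (u ∩ v).Nonempty ∧ w = u ∪ v}

/-- A conformity on `X`: a filter `𝒞` of subsets of the finite power set of `X`
(closed under finite intersections and supersets, not containing `∅`) such that
(C1) every member contains all singletons, (C2) every member is downward
closed, and (C3) for every `C ∈ 𝒞` there is `D ∈ 𝒞` with `D ∘ D ⊆ C`. -/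
structure Conformity (X : Type*) [DecidableEq X] where
  sets : Set (Set (Finset X))
  univ_mem : Set.univ ∈ sets
  superset_mem : ∀ {C D : Set (Finset X)}, C ∈ sets → C ⊆ D → D ∈ sets
  inter_mem : ∀ {C D : Set (Finset X)}, C ∈ sets → D ∈ sets → C ∩ D ∈ sets
  empty_not_mem : ∅ ∉ sets
  singleton_mem : ∀ {C : Set (Finset X)}, C ∈ sets → ∀ x : X, ({x} : Finset X) ∈ C
  down_closed : ∀ {C : Set (Finset X)}, C ∈ sets →
    ∀ {A B : Finset X}, A ∈ C → B ⊆ A → B ∈ C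
  comp_mem : ∀ {C : Set (Finset X)}, C ∈ sets → ∃ D ∈ sets, SetComp D D ⊆ C

/-- A countable base for a conformity: a countable family of members of the
filter such that every member of the filter contains one of them. -/
def Conformity.HasCountableBase {X : Type*} [DecidableEq X] (𝒞 : Conformity X) : Prop :=
  ∃ B : ℕ → Set (Finset X), (∀ n, B n ∈ 𝒞.sets) ∧ ∀ C ∈ 𝒞.sets, ∃ n, B n ⊆ C

lemma setComp_mono {X : Type*} [DecidableEq X] {U U' V V' : Set (Finset X)}
    (hU : U ⊆ U') (hV : V ⊆ V') : SetComp U V ⊆ SetComp U' V' := by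
  rintro w ⟨u, hu, v, hv, hne, rfl⟩
  exact ⟨u, hU hu, v, hV hv, hne, rfl⟩

lemma triple_comp {X : Type*} [DecidableEq X] (𝒞 : Conformity X)
    {C : Set (Finset X)} (hC : C ∈ 𝒞.sets) :
    ∃ D ∈ 𝒞.sets, D ⊆ C ∧ SetComp (SetComp D D) D ⊆ C := by
  obtain ⟨D, hD, hDC⟩ := 𝒞.comp_mem hC
  obtain ⟨E, hE, hED⟩ := 𝒞.comp_mem hD
  refine ⟨E ∩ D ∩ C, 𝒞.inter_mem (𝒞.inter_mem hE hD) hC, fun x hx => hx.2, ?_⟩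
  have h1 : (E ∩ D ∩ C : Set (Finset X)) ⊆ E := fun x hx => hx.1.1
  have h2 : (E ∩ D ∩ C : Set (Finset X)) ⊆ D := fun x hx => hx.1.2
  calc SetComp (SetComp (E ∩ D ∩ C) (E ∩ D ∩ C)) (E ∩ D ∩ C)
      ⊆ SetComp (SetComp E E) D := setComp_mono (setComp_mono h1 h1) h2
    _ ⊆ SetComp D D := setComp_mono hED (fun _ hx => hx)
    _ ⊆ C := hDC

/-- A conformity with a countable base has a countable base `{C_n}` with
`C₀ = P_fin(X)` and `C_i ∘ C_i ∘ C_i ⊆ C_{i−1}` for all `i > 0`. -/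
theorem exists_nice_countable_base {X : Type*} [DecidableEq X] (𝒞 : Conformity X)
    (h : 𝒞.HasCountableBase) :
    ∃ C : ℕ → Set (Finset X),
      (∀ n, C n ∈ 𝒞.sets) ∧
      (∀ u ∈ 𝒞.sets, ∃ n, C n ⊆ u) ∧
      C 0 = Set.univ ∧
      ∀ i : ℕ, 0 < i → SetComp (SetComp (C i) (C i)) (C i) ⊆ C (i - 1) := by
  classical
  obtain ⟨B, hBmem, hBbase⟩ := h
  -- next : given a member S and index n, produce the next member
  have step : ∀ (S : {S : Set (Finset X) // S ∈ 𝒞.sets}) (n : ℕ),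
      ∃ D ∈ 𝒞.sets, D ⊆ (S : Set (Finset X)) ∩ B n ∧
        SetComp (SetComp D D) D ⊆ (S : Set (Finset X)) ∩ B n := by
    intro S n
    exact triple_comp 𝒞 (𝒞.inter_mem S.2 (hBmem n))
  choose f hf1 hf2 hf3 using step
  let g : ℕ → {S : Set (Finset X) // S ∈ 𝒞.sets} :=
    fun n => Nat.rec ⟨Set.univ, 𝒞.univ_mem⟩ (fun k S => ⟨f S k, hf1 S k⟩) n
  have gsucc : ∀ n, (g (n + 1)).1 = f (g n) n := fun n => rfl
  refine ⟨fun n => (g n).1, ?_, ?_, ?_, ?_⟩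
  · exact fun n => (g n).2
  
  · intro u hu
    obtain ⟨n, hn⟩ := hBbase u hu
    refine ⟨n + 1, ?_⟩
    have : (g (n + 1)).1 ⊆ (g n).1 ∩ B n := gsucc n ▸ hf2 (g n) n
    exact fun x hx => hn (this hx).2
  · rfl
  · intro i hi
    obtain ⟨k, rfl⟩ := Nat.exists_eq_add_of_lt hi
    simp only [Nat.zero_add, Nat.add_sub_cancel]
    have : SetComp (SetComp (g (k + 1)).1 (g (k + 1)).1) (g (k + 1)).1
        ⊆ (g k).1 ∩ B k := gsucc k ▸ hf3 (g k) k
    exact fun x hx => (this hx).1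
end

section
/- Let δ be a pseudodiversity on X and let 𝒞 be the conformity generated by δ. Then (X, δ) is a complete pseudodiversity (every Cauchy sequence converges) if and only if (X, 𝒞) is a complete conformity (every Cauchy filter converges). -/
/-- A pseudodiversity on `X`: a real-valued function on finite subsets of `X`
that is nonnegative, vanishes on sets with at most one element, and satisfies
the triangle inequality `δ(A ∪ B) ≤ δ(A ∪ C) + δ(C ∪ B)` for nonempty `C`. -/
structure Pseudodiversity (X : Type*) [DecidableEq X] where
  δ : Finset X → ℝ
  nonneg : ∀ A : Finset X, 0 ≤ δ A
  eq_zero_of_card_le : ∀ A : Finset X, A.card ≤ 1 → δ A = 0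
  triangle : ∀ A B C : Finset X, C.Nonempty → δ (A ∪ B) ≤ δ (A ∪ C) + δ (C ∪ B)

/-- The conformity generated by a pseudodiversity `δ`: the filter on the
finite power set of `X` generated by the sets `{A : δ(A) ≤ ε}`, `ε > 0`. -/
def genConf {X : Type*} [DecidableEq X] (δ : Finset X → ℝ) : Set (Set (Finset X)) :=
  {C | ∃ ε > (0 : ℝ), {A : Finset X | δ A ≤ ε} ⊆ C}

/-- A filter `F` on `X` is Cauchy with respect to a conformity when for every
member `C` of the conformity there is `f ∈ F` with `P_fin(f) ⊆ C`. -/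
def ConfCauchyFilter {X : Type*} (𝒞 : Set (Set (Finset X))) (F : Filter X) : Prop :=
  ∀ C ∈ 𝒞, ∃ f ∈ F, {A : Finset X | ↑A ⊆ f} ⊆ C

/-- A filter `F` on `X` converges to `x` with respect to a conformity when for
every member `C` of the conformity there is `f ∈ F` with
`P_fin(f) ⊆ {A : A ∪ {x} ∈ C}`. -/
def ConfFilterTendsto {X : Type*} [DecidableEq X] (𝒞 : Set (Set (Finset X)))
    (F : Filter X) (x : X) : Prop :=
  ∀ C ∈ 𝒞, ∃ f ∈ F, ∀ A : Finset X, ↑A ⊆ f → insert x A ∈ C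

lemma pd_le_insert {X : Type*} [DecidableEq X] (d : Pseudodiversity X) (b : X) (A : Finset X) :
    d.δ A ≤ d.δ (insert b A) := by
  have h := d.triangle A ∅ {b} (Finset.singleton_nonempty b)
  have h0 : d.δ {b} = 0 := d.eq_zero_of_card_le _ (by simp)
  simpa [h0, Finset.union_comm A {b}] using h

lemma pd_mono {X : Type*} [DecidableEq X] (d : Pseudodiversity X) {A B : Finset X}
    (h : A ⊆ B) : d.δ A ≤ d.δ B := by
  have key : ∀ C : Finset X, d.δ A ≤ d.δ (A ∪ C) := by
    intro C
    induction C using Finset.induction_on with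
    | empty => simp
    | @insert b s hb ih =>
      calc d.δ A ≤ d.δ (A ∪ s) := ih
        _ ≤ d.δ (insert b (A ∪ s)) := pd_le_insert d b _
        _ = d.δ (A ∪ insert b s) := by rw [Finset.union_insert]
  have := key B
  rwa [Finset.union_eq_right.mpr h] at this

/-- A pseudodiversity is complete (every Cauchy sequence converges) if and only
if the conformity it generates is complete (every Cauchy filter converges). -/
theorem pseudodiversity_complete_iff_conformity_complete {X : Type*} [DecidableEq X]
    (δ : Pseudodiversity X) :
    (∀ x : ℕ → X, DivCauchy δ.δ x → ∃ p, DivTendsto δ.δ x p) ↔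
    (∀ F : Filter X, F.NeBot → ConfCauchyFilter (genConf δ.δ) F →
      ∃ x, ConfFilterTendsto (genConf δ.δ) F x) := by
  constructor
  · intro hseq F hne hF
    have key : ∀ n : ℕ, ∃ f ∈ F, ∀ A : Finset X, ↑A ⊆ f → δ.δ A ≤ 1 / (n + 1 : ℝ) := by
      intro n
      obtain ⟨f, hf, hsub⟩ := hF {A | δ.δ A ≤ 1 / (n + 1 : ℝ)}
        ⟨1 / (n + 1 : ℝ), by positivity, subset_rfl⟩
      exact ⟨f, hf, fun A hA => hsub hA⟩
    choose f hfF hfδ using key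
    set g : ℕ → Set X := fun n => ⋂ k ∈ Finset.range (n + 1), f k with hgdef
    have hgF : ∀ n, g n ∈ F := fun n =>
      (Filter.biInter_finset_mem _).mpr fun k _ => hfF k
    have hgmono : ∀ {m n : ℕ}, m ≤ n → g n ⊆ g m := by
      intro m n hmn a ha
      simp only [hgdef, Set.mem_iInter, Finset.mem_range] at ha ⊢
      intro k hk
      exact ha k (lt_of_lt_of_le hk (by omega))
    have hgf : ∀ n, g n ⊆ f n := by
      intro n a ha
      simp only [hgdef, Set.mem_iInter, Finset.mem_range] at ha
      exact ha n (by omega)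
    have hgne : ∀ n, (g n).Nonempty := fun n => F.nonempty_of_mem (hgF n)
    choose x hx using hgne
    have hxC : DivCauchy δ.δ x := by
      intro ε hε
      obtain ⟨N, hN⟩ : ∃ N : ℕ, 1 / ((N : ℝ) + 1) < ε := by
        obtain ⟨N, hN⟩ := exists_nat_one_div_lt hε
        exact ⟨N, hN⟩
      refine ⟨N, fun I hI => ?_⟩
      have hsub : ↑(I.image x) ⊆ f N := by
        intro a ha
        simp only [Finset.coe_image, Set.mem_image, Finset.mem_coe] at ha
        obtain ⟨i, hi, rfl⟩ := ha
        exact hgf N (hgmono (hI i hi) (hx i))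
      exact lt_of_le_of_lt (hfδ N _ hsub) hN
    obtain ⟨p, hp⟩ := hseq x hxC
    refine ⟨p, ?_⟩
    intro C hC
    obtain ⟨ε, hε, hsub⟩ := hC
    obtain ⟨N1, hN1⟩ := hp (ε / 2) (by linarith)
    obtain ⟨M, hM⟩ : ∃ M : ℕ, 1 / ((M : ℝ) + 1) < ε / 2 := by
      obtain ⟨M, hM⟩ := exists_nat_one_div_lt (show (0:ℝ) < ε / 2 by linarith)
      exact ⟨M, hM⟩
    set n := max N1 M with hn
    refine ⟨g n, hgF n, fun A hA => ?_⟩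
    apply hsub
    show δ.δ (insert p A) ≤ ε
    have h1 : δ.δ (insert p {x n}) < ε / 2 := by
      have := hN1 {n} (by simp [hn])
      simpa using this
    have h2 : δ.δ (insert (x n) A) ≤ 1 / ((M : ℝ) + 1) := by
      apply hfδ M
      intro a ha
      simp only [Finset.coe_insert, Set.mem_insert_iff, Finset.mem_coe] at ha
      rcases ha with rfl | ha
      · exact hgf M (hgmono (le_max_right _ _) (hx n))
      · exact hgf M (hgmono (le_max_right _ _) (hA ha))
    have htri := δ.triangle {p} A {x n} (Finset.singleton_nonempty _)
    have hfin : δ.δ (insert p A) ≤ δ.δ (insert p {x n}) + δ.δ (insert (x n) A) := by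
      simpa using htri
    linarith
  · intro hfil x hx
    have hne : (Filter.map x Filter.atTop).NeBot := Filter.map_neBot
    have hCau : ConfCauchyFilter (genConf δ.δ) (Filter.map x Filter.atTop) := by
      intro C hC
      obtain ⟨ε, hε, hsub⟩ := hC
      obtain ⟨N, hN⟩ := hx ε hε
      refine ⟨x '' Set.Ici N, Filter.image_mem_map (Filter.Ici_mem_atTop N), ?_⟩
      intro A hA
      apply hsub
      have hch : ∀ a ∈ A, ∃ i, N ≤ i ∧ x i = a := by
        intro a ha
        obtain ⟨i, hi, hxi⟩ := hA ha
        exact ⟨i, hi, hxi⟩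
      choose gg hg1 hg2 using hch
      set I : Finset ℕ := A.attach.image (fun a => gg a.1 a.2) with hI
      have hAsub : A ⊆ I.image x := by
        intro a ha
        simp only [hI, Finset.mem_image, Finset.mem_attach]
        exact ⟨gg a ha, ⟨⟨a, ha⟩, trivial, rfl⟩, hg2 a ha⟩
      have hIge : ∀ i ∈ I, N ≤ i := by
        intro i hi
        simp only [hI, Finset.mem_image, Finset.mem_attach, true_and] at hi
        obtain ⟨a, rfl⟩ := hi
        exact hg1 a.1 a.2
      calc δ.δ A ≤ δ.δ (I.image x) := pd_mono δ hAsub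
        _ ≤ ε := le_of_lt (hN I hIge)
    obtain ⟨p, hp⟩ := hfil _ hne hCau
    refine ⟨p, fun ε hε => ?_⟩
    obtain ⟨f, hf, hA⟩ := hp {A | δ.δ A ≤ ε / 2} ⟨ε / 2, by linarith, subset_rfl⟩
    rw [Filter.mem_map, Filter.mem_atTop_sets] at hf
    obtain ⟨N, hN⟩ := hf
    refine ⟨N, fun I hI => ?_⟩
    have hsub : ↑(I.image x) ⊆ f := by
      intro a ha
      simp only [Finset.coe_image, Set.mem_image, Finset.mem_coe] at ha
      obtain ⟨i, hi, rfl⟩ := ha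
      exact hN i (hI i hi)
    have := hA _ hsub
    simp only [Set.mem_setOf_eq] at this
    linarith
end
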